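/- For every (ξ,η) ∈ 𝒞₀, the gradient ∇Φ(ξ,η) = (θ, −ω) is not a linear combination of ∇Υ(ξ,η) = (2ξ, −2η) and ∇Υ₀(ξ,η); equivalently, there exists v ∈ ℝ^{N+2} with ⟨∇Υ(ξ,η), v⟩ = 0, ⟨∇Υ₀(ξ,η), v⟩ = 0 and ⟨∇Φ(ξ,η), v⟩ ≠ 0, i.e. the differential of Φ does not vanish on the tangent space to 𝒞₀. -/

import Mathlib

/-- The tail `ξ̄ = (ξ₁, …, ξ_m)` of a vector `ξ = (ξ₀, ξ̄) ∈ ℝ^{m+1}`. -/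
noncomputable def tailVec {m : ℕ} (ξ : EuclideanSpace ℝ (Fin (m + 1))) :
    EuclideanSpace ℝ (Fin m) := WithLp.toLp 2 (fun (i : Fin m) => ξ i.succ)

/-- for every `(ξ,η) ∈ 𝒞₀`, the gradient `∇Φ(ξ,η) = (θ, −ω)` is not a linear
combination of `∇Υ(ξ,η) = (2ξ, −2η)` and `∇Υ₀(ξ,η)`; equivalently there is a vector
`v = (v₁, v₂) ∈ ℝ^{N+2}` orthogonal to `∇Υ(ξ,η)` and `∇Υ₀(ξ,η)` but not to `∇Φ(ξ,η)`,
i.e. the differential of `Φ` does not vanish on the tangent space to `𝒞₀`. -/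
theorem dPhi_nonzero_on_tangent_C0
    (d n : ℕ) (hd : 1 ≤ d) (hn : 1 ≤ n)
    (θ : EuclideanSpace ℝ (Fin (d + 1))) (ω : EuclideanSpace ℝ (Fin (n + 1)))
    (hθ : ‖θ‖ = 1) (hω : ‖ω‖ = 1) (hnontang : θ 0 + ω 0 ≠ 0)
    (ξ : EuclideanSpace ℝ (Fin (d + 1))) (η : EuclideanSpace ℝ (Fin (n + 1)))
    (hne : (ξ, η) ≠ 0)
    (hΥ : ‖ξ‖ ^ 2 - ‖η‖ ^ 2 = 0)
    (hΥ₀ : ξ 0 + η 0 = 0)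
    (hbar : tailVec ξ ≠ 0) :
    (∀ α α₀ : ℝ,
        (θ, -ω) ≠ (α • ((2 : ℝ) • ξ, -((2 : ℝ) • η)) +
          α₀ • ((EuclideanSpace.single 0 (1 : ℝ) : EuclideanSpace ℝ (Fin (d + 1))),
                (EuclideanSpace.single 0 (1 : ℝ) : EuclideanSpace ℝ (Fin (n + 1)))))) ∧
    ∃ (v₁ : EuclideanSpace ℝ (Fin (d + 1))) (v₂ : EuclideanSpace ℝ (Fin (n + 1))),
      (inner ℝ ((2 : ℝ) • ξ) v₁ + inner ℝ (-((2 : ℝ) • η)) v₂ : ℝ) = 0 ∧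
      (inner ℝ (EuclideanSpace.single 0 (1 : ℝ) : EuclideanSpace ℝ (Fin (d + 1))) v₁
        + inner ℝ (EuclideanSpace.single 0 (1 : ℝ) : EuclideanSpace ℝ (Fin (n + 1))) v₂ : ℝ) = 0 ∧
      (inner ℝ θ v₁ + inner ℝ (-ω) v₂ : ℝ) ≠ 0 := by
  constructor
  · intro α α₀ heq
    have h1 := congrArg (fun v => v 0) (congrArg Prod.fst heq)
    have h2 := congrArg (fun v => v 0) (congrArg Prod.snd heq)
    simp only [Prod.smul_mk, Prod.mk_add_mk, PiLp.add_apply, PiLp.smul_apply,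
      PiLp.neg_apply, smul_eq_mul, EuclideanSpace.single_apply, if_pos rfl] at h1 h2
    apply hnontang
    have : θ 0 + ω 0 = 2 * α * (ξ 0 + η 0) := by
      rw [h1]; nlinarith [h2]
    rw [this, hΥ₀]; ring
  · refine ⟨EuclideanSpace.single 0 (1 : ℝ), -(EuclideanSpace.single 0 (1 : ℝ)), ?_, ?_, ?_⟩
    · rw [inner_neg_left, inner_neg_right, real_inner_smul_left, real_inner_smul_left,
        EuclideanSpace.inner_single_right, EuclideanSpace.inner_single_right]
      simp only [RCLike.conj_to_real, one_mul]
      linarith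
    · rw [inner_neg_right, real_inner_self_eq_norm_sq]
      simp
    · rw [inner_neg_left, inner_neg_right, EuclideanSpace.inner_single_right,
        EuclideanSpace.inner_single_right]
      simpa using hnontang
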